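/- Let α > 0 and λ > 0. Let the law of the random variable U on (0,∞) be the Gamma mixture (Gamma(λ, rate 1/2)).bind (fun v => Gamma(α, rate 1/(2v))), i.e. V ~ Gamma(shape λ, scale 2) and conditionally on V = v, U ~ Gamma(shape α, scale 2v). Then U is absolutely continuous with respect to Lebesgue measure with density f(u) = ( 2^{−(λ+α)} / (Γ(α) Γ(λ)) ) · u^{α−1} · ∫_0^∞ v^{λ−α−1} e^{−(u/v + v)/2} dv for u > 0. (This is Theorem A.2 of the paper; the inner integral equals 2 u^{(λ−α)/2} K_{α−λ}(√u), where K is the modified Bessel function of the second kind.) -/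

import Mathlib

open MeasureTheory ProbabilityTheory

section Aux

open Real Set Nat

lemma gm_pow_le_factorial_mul_exp (n : ℕ) {x : ℝ} (hx : 0 ≤ x) : x ^ n ≤ n ! * Real.exp x := by
  have h := Real.sum_le_exp_of_nonneg hx (n + 1)
  have h1 : x ^ n / n ! ≤ ∑ i ∈ Finset.range (n + 1), x ^ i / i ! := by
    refine Finset.single_le_sum (f := fun i => x ^ i / i !) (fun i _ => by positivity) ?_
    simp
  have hn : (0:ℝ) < n ! := by positivity
  rw [div_le_iff₀ hn] at h1
  calc x ^ n ≤ (∑ i ∈ Finset.range (n + 1), x ^ i / i !) * n ! := h1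
    _ ≤ Real.exp x * n ! := by gcongr
    _ = n ! * Real.exp x := mul_comm _ _

lemma gm_aux_measurable (p u : ℝ) :
    Measurable (fun v : ℝ => v ^ p * Real.exp (-(u / v + v) / 2)) := by
  fun_prop

lemma gm_aux_integrable {p u : ℝ} (hu : 0 < u) :
    IntegrableOn (fun v => v ^ p * Real.exp (-(u / v + v) / 2)) (Set.Ioi 0) := by
  have hm := gm_aux_measurable p u
  have hsplit : Set.Ioi (0:ℝ) = Set.Ioc 0 1 ∪ Set.Ioi 1 :=
    (Set.Ioc_union_Ioi_eq_Ioi zero_le_one).symm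
  rw [hsplit]
  apply IntegrableOn.union
  · set n : ℕ := ⌈-p⌉₊ with hn
    have hpn : 0 ≤ p + n := by
      have := Nat.le_ceil (-p); linarith
    refine Measure.integrableOn_of_bounded (M := n ! * (2 / u) ^ n) (by simp)
      hm.aestronglyMeasurable ?_
    rw [ae_restrict_iff' measurableSet_Ioc]
    refine ae_of_all _ fun v hv => ?_
    obtain ⟨hv0, hv1⟩ := hv
    have hvp : (0:ℝ) < v := hv0
    have hx : (0:ℝ) < u / (2 * v) := by positivity
    have e0 : Real.exp (-(u / v + v) / 2) ≤ Real.exp (-(u / (2 * v))) := by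
      apply Real.exp_le_exp.mpr
      have hw : u / (2 * v) = (u / v) / 2 := by ring
      rw [hw]
      have : 0 ≤ v := hvp.le
      linarith
    have e1 : Real.exp (-(u / (2 * v))) ≤ n ! * (2 * v / u) ^ n := by
      have h2 : (u / (2 * v)) ^ n / n ! ≤ Real.exp (u / (2 * v)) := by
        rw [div_le_iff₀ (by positivity)]
        have := gm_pow_le_factorial_mul_exp n hx.le
        linarith [mul_comm (Real.exp (u / (2 * v))) ((n ! : ℝ))]
      rw [Real.exp_neg]
      have h5 : (Real.exp (u / (2 * v)))⁻¹ ≤ ((u / (2 * v)) ^ n / n !)⁻¹ := by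
        apply inv_anti₀ (by positivity) h2
      refine h5.trans (le_of_eq ?_)
      have hxne : (u / (2 * v)) ^ n ≠ 0 := by positivity
      have hfne : (n ! : ℝ) ≠ 0 := by positivity
      rw [inv_div, div_eq_mul_inv, ← inv_pow, inv_div]
    have e2 : v ^ p * v ^ (n:ℕ) ≤ 1 := by
      have : v ^ p * (v:ℝ) ^ (n:ℕ) = v ^ (p + n) := by
        rw [← Real.rpow_natCast v n, ← Real.rpow_add hvp]
      rw [this]
      exact Real.rpow_le_one hvp.le hv1 hpn
    rw [Real.norm_eq_abs, abs_of_nonneg (by positivity)]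
    have hrp : 0 ≤ v ^ p := Real.rpow_nonneg hvp.le p
    calc v ^ p * Real.exp (-(u / v + v) / 2) ≤ v ^ p * (n ! * (2 * v / u) ^ n) := by
          apply mul_le_mul_of_nonneg_left (le_trans e0 e1) hrp
      _ = (n ! * (2 / u) ^ n) * (v ^ p * v ^ (n:ℕ)) := by
          rw [div_pow, div_pow, mul_pow]; field_simp
      _ ≤ (n ! * (2 / u) ^ n) * 1 := by
          apply mul_le_mul_of_nonneg_left e2 (by positivity)
      _ = n ! * (2 / u) ^ n := mul_one _
  · set q : ℝ := max p 0 with hq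
    have hint : IntegrableOn (fun v : ℝ => v ^ q * Real.exp (-(1/2) * v)) (Set.Ioi 1) := by
      have := integrableOn_rpow_mul_exp_neg_mul_rpow (p := 1) (s := q) (b := 1/2)
        (lt_of_lt_of_le neg_one_lt_zero (le_max_right p 0)) zero_lt_one (by norm_num)
      simp_rw [Real.rpow_one] at this
      exact this.mono_set (Set.Ioi_subset_Ioi zero_le_one)
    refine Integrable.mono' hint hm.aestronglyMeasurable ?_
    rw [ae_restrict_iff' measurableSet_Ioi]
    refine ae_of_all _ fun v hv => ?_
    have hv1 : (1:ℝ) < v := hv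
    have hv0 : (0:ℝ) < v := lt_trans one_pos hv1
    rw [Real.norm_eq_abs, abs_of_nonneg (by positivity)]
    have h1 : v ^ p ≤ v ^ q := Real.rpow_le_rpow_of_exponent_le hv1.le (le_max_left _ _)
    have h2 : Real.exp (-(u / v + v) / 2) ≤ Real.exp (-(1/2) * v) := by
      apply Real.exp_le_exp.mpr
      have : 0 ≤ u / v := by positivity
      nlinarith
    have h3 : 0 ≤ Real.exp (-(u / v + v) / 2) := (Real.exp_pos _).le
    have h4 : 0 ≤ v ^ q := Real.rpow_nonneg hv0.le q
    nlinarith [Real.rpow_nonneg hv0.le p, (Real.exp_pos (-(1/2) * v)).le]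

lemma gm_aux_joint (a : ℝ) : Measurable (fun q : ℝ × ℝ => gammaPDF a (1/(2*q.1)) q.2) := by
  unfold gammaPDF gammaPDFReal
  apply Measurable.ennreal_ofReal
  apply Measurable.ite (measurableSet_le measurable_const measurable_snd)
  · fun_prop
  · exact measurable_const

lemma gm_aux_real (α lam : ℝ) {u v : ℝ} (hu : 0 < u) (hv : 0 < v) :
    gammaPDFReal lam (1/2) v * gammaPDFReal α (1/(2*v)) u =
      (2 : ℝ) ^ (-(lam + α)) / (Real.Gamma α * Real.Gamma lam) * u ^ (α - 1) *
        (v ^ (lam - α - 1) * Real.exp (-(u / v + v) / 2)) := by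
  have h1 : ((1:ℝ)/2) ^ lam = (2:ℝ) ^ (-lam) := by
    rw [Real.rpow_neg (by norm_num : (0:ℝ) ≤ 2), one_div,
      ← Real.inv_rpow (by norm_num : (0:ℝ) ≤ 2)]
  have h2 : ((1:ℝ)/(2*v)) ^ α = (2:ℝ) ^ (-α) * v ^ (-α) := by
    rw [one_div, Real.inv_rpow (by positivity), Real.mul_rpow (by norm_num : (0:ℝ) ≤ 2) hv.le,
      mul_inv, ← Real.rpow_neg (by norm_num : (0:ℝ) ≤ 2), ← Real.rpow_neg hv.le]
  have h3 : Real.exp (-((1:ℝ)/2 * v)) * Real.exp (-((1:ℝ)/(2*v) * u)) =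
      Real.exp (-(u / v + v) / 2) := by
    rw [← Real.exp_add]
    congr 1
    field_simp
    ring
  have h4 : v ^ (lam - 1) * v ^ (-α) = v ^ (lam - α - 1) := by
    rw [← Real.rpow_add hv]
    ring_nf
  have h5 : (2:ℝ) ^ (-lam) * (2:ℝ) ^ (-α) = (2:ℝ) ^ (-(lam + α)) := by
    rw [← Real.rpow_add (by norm_num : (0:ℝ) < 2)]
    ring_nf
  rw [gammaPDFReal, gammaPDFReal, if_pos hv.le, if_pos hu.le, h1, h2, ← h3, ← h4, ← h5]
  ring

lemma gm_aux_pointwise (α lam : ℝ) (hα : 0 < α) (hlam : 0 < lam) {u : ℝ} (hu : 0 < u) :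
    ∫⁻ v, gammaPDF lam (1/2) v * gammaPDF α (1/(2*v)) u =
      ENNReal.ofReal ((2 : ℝ) ^ (-(lam + α)) / (Real.Gamma α * Real.Gamma lam) * u ^ (α - 1) *
        ∫ v in Set.Ioi (0:ℝ), v ^ (lam - α - 1) * Real.exp (-(u / v + v) / 2)) := by
  set C : ℝ := (2 : ℝ) ^ (-(lam + α)) / (Real.Gamma α * Real.Gamma lam) * u ^ (α - 1) with hC
  have hCnn : 0 ≤ C := by
    have := Real.Gamma_pos_of_pos hα
    have := Real.Gamma_pos_of_pos hlam
    positivity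
  have step1 : ∫⁻ v, gammaPDF lam (1/2) v * gammaPDF α (1/(2*v)) u =
      ∫⁻ v in Set.Ioi (0:ℝ), gammaPDF lam (1/2) v * gammaPDF α (1/(2*v)) u := by
    rw [← lintegral_indicator measurableSet_Ioi]
    apply lintegral_congr_ae
    have hsub : {v : ℝ | ¬ (gammaPDF lam (1/2) v * gammaPDF α (1/(2*v)) u =
        (Set.Ioi (0:ℝ)).indicator (fun v => gammaPDF lam (1/2) v * gammaPDF α (1/(2*v)) u) v)}
        ⊆ {0} := by
      intro v hv
      simp only [Set.mem_setOf_eq] at hv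
      by_contra h0
      rcases lt_trichotomy v 0 with h | h | h
      · exact hv (by rw [Set.indicator_of_notMem (by simpa using h.not_gt : v ∉ Set.Ioi (0:ℝ)),
          gammaPDF_of_neg h, zero_mul])
      · exact h0 h
      · exact hv (by rw [Set.indicator_of_mem (Set.mem_Ioi.mpr h)])
    exact ae_iff.mpr (measure_mono_null hsub (by simp))
  rw [step1]
  have step2 : ∫⁻ v in Set.Ioi (0:ℝ), gammaPDF lam (1/2) v * gammaPDF α (1/(2*v)) u =
      ∫⁻ v in Set.Ioi (0:ℝ),
        ENNReal.ofReal (C * (v ^ (lam - α - 1) * Real.exp (-(u / v + v) / 2))) := by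
    apply setLIntegral_congr_fun measurableSet_Ioi
    intro v hv
    beta_reduce
    have hv0 : (0:ℝ) < v := hv
    rw [gammaPDF_eq, gammaPDF_eq, ← ENNReal.ofReal_mul (by
      rw [← gammaPDFReal]; exact gammaPDFReal_nonneg hlam (by norm_num) v)]
    rw [← gammaPDFReal, ← gammaPDFReal, gm_aux_real α lam hu hv0]
  rw [step2]
  have step3 : ∫⁻ v in Set.Ioi (0:ℝ),
      ENNReal.ofReal (C * (v ^ (lam - α - 1) * Real.exp (-(u / v + v) / 2))) =
      ENNReal.ofReal C * ∫⁻ v in Set.Ioi (0:ℝ),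
        ENNReal.ofReal (v ^ (lam - α - 1) * Real.exp (-(u / v + v) / 2)) := by
    simp_rw [ENNReal.ofReal_mul hCnn]
    rw [lintegral_const_mul' _ _ ENNReal.ofReal_ne_top]
  rw [step3]
  have step4 : ∫⁻ v in Set.Ioi (0:ℝ),
      ENNReal.ofReal (v ^ (lam - α - 1) * Real.exp (-(u / v + v) / 2)) =
      ENNReal.ofReal (∫ v in Set.Ioi (0:ℝ), v ^ (lam - α - 1) * Real.exp (-(u / v + v) / 2)) := by
    rw [← ofReal_integral_eq_lintegral_ofReal (gm_aux_integrable hu)]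
    · exact (ae_restrict_iff' measurableSet_Ioi).mpr (ae_of_all _ fun v hv => by
        have : (0:ℝ) < v := hv
        positivity)
  rw [step4, ← ENNReal.ofReal_mul hCnn]

end Aux

/-- If `V ~ Gamma(shape λ, scale 2)` and `U | V = v ~ Gamma(shape α, scale 2v)`, then `U`
has Lebesgue density
`u ↦ 2^(−(λ+α))/(Γ(α)Γ(λ)) · u^(α−1) · ∫_0^∞ v^(λ−α−1) e^(−(u/v+v)/2) dv` on `(0,∞)`. -/
theorem gamma_mixture_density
    (α lam : ℝ) (hα : 0 < α) (hlam : 0 < lam) :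
    (gammaMeasure lam (1 / 2)).bind (fun v => gammaMeasure α (1 / (2 * v))) =
      volume.withDensity (fun u =>
        ENNReal.ofReal (if 0 < u then
          (2 : ℝ) ^ (-(lam + α)) / (Real.Gamma α * Real.Gamma lam) * u ^ (α - 1) *
            ∫ v in Set.Ioi (0 : ℝ), v ^ (lam - α - 1) * Real.exp (-(u / v + v) / 2)
        else 0)) := by
  have hκ : Measurable (fun v : ℝ => gammaMeasure α (1 / (2 * v))) := by
    apply Measure.measurable_of_measurable_coe
    intro s hs
    simp_rw [gammaMeasure, withDensity_apply _ hs]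
    exact Measurable.lintegral_prod_right' (gm_aux_joint α)
  have hg1 : Measurable (gammaPDF lam (1/2)) :=
    (measurable_gammaPDFReal lam (1/2)).ennreal_ofReal
  ext s hs
  rw [Measure.bind_apply hs hκ.aemeasurable, withDensity_apply _ hs]
  calc ∫⁻ v, gammaMeasure α (1 / (2 * v)) s ∂(gammaMeasure lam (1/2))
      = ∫⁻ v, (∫⁻ u in s, gammaPDF α (1/(2*v)) u) ∂(gammaMeasure lam (1/2)) := by
        apply lintegral_congr fun v => ?_
        rw [gammaMeasure, withDensity_apply _ hs]
    _ = ∫⁻ v, gammaPDF lam (1/2) v * ∫⁻ u in s, gammaPDF α (1/(2*v)) u := by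
        rw [gammaMeasure, lintegral_withDensity_eq_lintegral_mul _ hg1
          (Measurable.lintegral_prod_right' (gm_aux_joint α))]
        rfl
    _ = ∫⁻ v, ∫⁻ u in s, gammaPDF lam (1/2) v * gammaPDF α (1/(2*v)) u := by
        apply lintegral_congr fun v => ?_
        exact (lintegral_const_mul' _ _ ENNReal.ofReal_ne_top).symm
    _ = ∫⁻ u in s, ∫⁻ v, gammaPDF lam (1/2) v * gammaPDF α (1/(2*v)) u := by
        apply lintegral_lintegral_swap
        exact ((hg1.comp measurable_fst).mul (gm_aux_joint α)).aemeasurable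
    _ = ∫⁻ u in s, ENNReal.ofReal (if 0 < u then
          (2 : ℝ) ^ (-(lam + α)) / (Real.Gamma α * Real.Gamma lam) * u ^ (α - 1) *
            ∫ v in Set.Ioi (0 : ℝ), v ^ (lam - α - 1) * Real.exp (-(u / v + v) / 2)
        else 0) := by
        apply lintegral_congr_ae
        apply ae_restrict_of_ae
        have hsub : {u : ℝ | ¬ ((∫⁻ v, gammaPDF lam (1/2) v * gammaPDF α (1/(2*v)) u) =
            ENNReal.ofReal (if 0 < u then
              (2 : ℝ) ^ (-(lam + α)) / (Real.Gamma α * Real.Gamma lam) * u ^ (α - 1) *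
                ∫ v in Set.Ioi (0 : ℝ), v ^ (lam - α - 1) * Real.exp (-(u / v + v) / 2)
            else 0))} ⊆ {0} := by
          intro u hu
          simp only [Set.mem_setOf_eq] at hu
          by_contra h0
          rcases lt_trichotomy u 0 with h | h | h
          · refine hu ?_
            rw [if_neg (by linarith), ENNReal.ofReal_zero]
            have : ∀ v : ℝ, gammaPDF lam (1/2) v * gammaPDF α (1/(2*v)) u = 0 := fun v => by
              rw [gammaPDF_of_neg h, mul_zero]
            simp only [this, lintegral_zero]
          · exact h0 h
          · exact hu (by rw [if_pos h]; exact gm_aux_pointwise α lam hα hlam h)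
        exact ae_iff.mpr (measure_mono_null hsub (by simp))
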